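/- Let r, a, b, c be natural numbers, let A be a b × a matrix and B a c × b matrix with entries in MvPolynomial (Fin r) ℂ with B * A = 0, and let μ be the product over Fin r of the normalized Haar probability measures on AddCircle 1 = ℝ/ℤ. For a torus point z : Fin r → AddCircle 1 let ev z : Fin r → ℂ be given by (ev z) i = the point of the unit circle corresponding to z i (the image of z i under the canonical map AddCircle 1 → S¹ ⊂ ℂ). Then the set of torus points z for which rank A(ev z) + rank B(ev z) is not maximal, i.e. {z | ∃ w : Fin r → ℂ, rank A(ev z) + rank B(ev z) < rank A(w) + rank B(w)}, has μ-measure zero. Consequently the middle homology dimension b − rank A(ev z) − rank B(ev z) equals its generic (minimal) value for μ-almost every torus point z. -/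

import Mathlib

open MeasureTheory

namespace NovikovAux

open Matrix Module

instance : NullSingletonClass (volume : Measure (AddCircle (1 : ℝ))) := by
  constructor
  intro x
  have h := AddCircle.volume_closedBall (T := 1) (x := x) 0
  rw [Metric.closedBall_zero] at h
  simpa using h

section MatrixRank

variable {m n : Type*} [Fintype m] [Fintype n] [DecidableEq m] [DecidableEq n]

lemma rank_submatrix_le' {k : ℕ} (M : Matrix m n ℂ) (f : Fin k → m) (g : Fin k → n) :
    (M.submatrix f g).rank ≤ M.rank := by
  have h1 : ((1 : Matrix m m ℂ).submatrix f (Equiv.refl m)) * M = M.submatrix f id := by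
    rw [Matrix.one_submatrix_mul]
    simp [Function.comp_def]
  have h2 : (M.submatrix f id) * ((1 : Matrix n n ℂ).submatrix (Equiv.refl n) g)
      = M.submatrix f g := by
    rw [Matrix.mul_submatrix_one]
    simp [Matrix.submatrix_submatrix, Function.comp_def]
  calc (M.submatrix f g).rank
      ≤ (M.submatrix f id).rank := by
        rw [← h2]; exact Matrix.rank_mul_le_left _ _
    _ ≤ M.rank := by
        rw [← h1]; exact Matrix.rank_mul_le_right _ _

lemma le_rank_of_minor {k : ℕ} (M : Matrix m n ℂ) (f : Fin k → m) (g : Fin k → n)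
    (h : (M.submatrix f g).det ≠ 0) : k ≤ M.rank := by
  have hu : IsUnit (M.submatrix f g) :=
    (Matrix.isUnit_iff_isUnit_det _).mpr (isUnit_iff_ne_zero.mpr h)
  have hr := Matrix.rank_of_isUnit _ hu
  calc k = (M.submatrix f g).rank := by rw [hr, Fintype.card_fin]
    _ ≤ M.rank := rank_submatrix_le' M f g

lemma exists_rows {k : ℕ} (M : Matrix m n ℂ) (hk : M.rank = k) :
    ∃ f : Fin k → m, (M.submatrix f id).rank = k := by
  classical
  obtain ⟨s, hs_sub, hs_span, hs_ind⟩ := exists_linearIndependent ℂ (Set.range M)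
  have hfin : s.Finite := (Set.finite_range M).subset hs_sub
  haveI : Fintype s := hfin.fintype
  have hcard : finrank ℂ (Submodule.span ℂ s) = s.toFinset.card :=
    finrank_span_set_eq_card hs_ind
  have hrank : M.rank = s.toFinset.card := by
    rw [M.rank_eq_finrank_span_row]
    change finrank ℂ (Submodule.span ℂ (Set.range M)) = _
    rw [← hs_span, hcard]
  have hc : s.toFinset.card = k := by rw [← hrank, hk]
  let ψ : Fin k → s.toFinset := fun i => s.toFinset.equivFin.symm (Fin.cast hc.symm i)
  have hψmem : ∀ i, ((ψ i : n → ℂ)) ∈ s := fun i => Set.mem_toFinset.mp (ψ i).2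
  have hψrange : ∀ i, ((ψ i : n → ℂ)) ∈ Set.range M := fun i => hs_sub (hψmem i)
  let f : Fin k → m := fun i => (hψrange i).choose
  have hMf : ∀ i, M (f i) = (ψ i : n → ℂ) := fun i => (hψrange i).choose_spec
  have hψinj : Function.Injective (fun i => (⟨(ψ i : n → ℂ), hψmem i⟩ : s)) := by
    intro i j hij
    have h1 : ((ψ i : n → ℂ)) = (ψ j : n → ℂ) := by
      simpa using congrArg Subtype.val hij
    have h2 := congrArg s.toFinset.equivFin (Subtype.ext h1)
    simpa [ψ, Fin.ext_iff] using h2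
  have hind : LinearIndependent ℂ fun i => M (f i) := by
    have := hs_ind.comp _ hψinj
    convert this using 1
    funext i
    exact hMf i
    all_goals rfl
  refine ⟨f, ?_⟩
  have : (M.submatrix f id) = fun i => M (f i) := rfl
  rw [show (M.submatrix f id).rank = _ from (hind.rank_matrix (M := M.submatrix f id))]
  exact Fintype.card_fin k

lemma exists_cols {k : ℕ} (M : Matrix m n ℂ) (hk : M.rank = k) :
    ∃ g : Fin k → n, (M.submatrix id g).rank = k := by
  have hT : Mᵀ.rank = k := by rw [Matrix.rank_transpose]; exact hk
  obtain ⟨g, hg⟩ := exists_rows Mᵀ hT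
  refine ⟨g, ?_⟩
  have h1 : (M.submatrix id g)ᵀ = Mᵀ.submatrix g id := rfl
  rw [← Matrix.rank_transpose (M.submatrix id g), h1, hg]

lemma exists_minor {k : ℕ} (M : Matrix m n ℂ) (hk : M.rank = k) :
    ∃ (f : Fin k → m) (g : Fin k → n), (M.submatrix f g).det ≠ 0 := by
  obtain ⟨f, hf⟩ := exists_rows M hk
  obtain ⟨g, hg⟩ := exists_cols (M.submatrix f id) hf
  refine ⟨f, g, ?_⟩
  have hsq : ((M.submatrix f id).submatrix id g) = M.submatrix f g := by
    simp [Matrix.submatrix_submatrix]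
  rw [← hsq]
  set S := (M.submatrix f id).submatrix id g with hSdef
  have hfr : finrank ℂ (LinearMap.range S.mulVecLin) = k := hg
  have htop : LinearMap.range S.mulVecLin = ⊤ := by
    apply Submodule.eq_top_of_finrank_eq
    rw [hfr, finrank_fintype_fun_eq_card, Fintype.card_fin]
  have hsurj : Function.Surjective S.mulVec := by
    intro v
    have hv : v ∈ LinearMap.range S.mulVecLin := htop ▸ Submodule.mem_top
    obtain ⟨u, hu⟩ := hv
    exact ⟨u, by rw [← Matrix.mulVecLin_apply]; exact hu⟩
  have hu : IsUnit S := Matrix.mulVec_surjective_iff_isUnit.mp hsurj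
  exact ((Matrix.isUnit_iff_isUnit_det S).mp hu).ne_zero

end MatrixRank

lemma eval_torus_zero_null :
    ∀ (r : ℕ) (P : MvPolynomial (Fin r) ℂ), P ≠ 0 →
      (Measure.pi fun _ : Fin r => (volume : Measure (AddCircle (1 : ℝ))))
        {z : Fin r → AddCircle (1 : ℝ) |
          MvPolynomial.eval (fun i => (AddCircle.toCircle (z i) : ℂ)) P = 0} = 0 := by
  intro r
  induction r with
  | zero =>
    intro P hP
    obtain ⟨c, rfl⟩ := MvPolynomial.C_surjective (Fin 0) P
    have hc : c ≠ 0 := fun h => hP (by rw [h, map_zero])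
    have hempty : {z : Fin 0 → AddCircle (1 : ℝ) |
        MvPolynomial.eval (fun i => (AddCircle.toCircle (z i) : ℂ)) (MvPolynomial.C c) = 0} = ∅ := by
      ext z
      simp [hc]
    rw [hempty]
    exact measure_empty
  | succ r IH =>
    intro P hP
    classical
    set Q : Polynomial (MvPolynomial (Fin r) ℂ) := MvPolynomial.finSuccEquiv ℂ r P with hQdef
    have hQ : Q ≠ 0 := fun h =>
      hP ((MvPolynomial.finSuccEquiv ℂ r).injective (h.trans (map_zero _).symm))
    set L : MvPolynomial (Fin r) ℂ := Q.leadingCoeff with hLdef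
    have hL : L ≠ 0 := Polynomial.leadingCoeff_ne_zero.mpr hQ
    set μ1 : Measure (AddCircle (1 : ℝ)) := volume with hμ1
    set μr := Measure.pi fun _ : Fin r => (volume : Measure (AddCircle (1 : ℝ))) with hμr
    set t : Set ((Fin r → AddCircle (1 : ℝ)) × AddCircle (1 : ℝ)) :=
      {p | MvPolynomial.eval
        (Fin.cons ((AddCircle.toCircle p.2 : ℂ)) (fun i => (AddCircle.toCircle (p.1 i) : ℂ)))
        P = 0} with htdef
    have hinner : Continuous fun p : (Fin r → AddCircle (1 : ℝ)) × AddCircle (1 : ℝ) =>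
        (Fin.cons ((AddCircle.toCircle p.2 : ℂ))
          (fun i => (AddCircle.toCircle (p.1 i) : ℂ)) : Fin (r + 1) → ℂ) := by
      apply continuous_pi
      intro i
      refine Fin.cases ?_ ?_ i
      · simp only [Fin.cons_zero]
        exact continuous_subtype_val.comp (AddCircle.continuous_toCircle.comp continuous_snd)
      · intro j
        simp only [Fin.cons_succ]
        exact continuous_subtype_val.comp
          (AddCircle.continuous_toCircle.comp ((continuous_apply j).comp continuous_fst))
    have ht_meas : MeasurableSet t := by
      have hcont : Continuous fun p : (Fin r → AddCircle (1 : ℝ)) × AddCircle (1 : ℝ) =>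
          MvPolynomial.eval
            (Fin.cons ((AddCircle.toCircle p.2 : ℂ))
              (fun i => (AddCircle.toCircle (p.1 i) : ℂ))) P :=
        (MvPolynomial.continuous_eval P).comp hinner
      exact (isClosed_singleton.preimage hcont).measurableSet
    set e := MeasurableEquiv.piFinSuccAbove (fun _ : Fin (r + 1) => AddCircle (1 : ℝ)) 0 with hedef
    have hmp := measurePreserving_piFinSuccAbove
      (fun _ : Fin (r + 1) => (volume : Measure (AddCircle (1 : ℝ)))) 0
    have hF : MeasurePreserving (Prod.swap ∘ e)
        (Measure.pi fun _ : Fin (r + 1) => (volume : Measure (AddCircle (1 : ℝ))))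
        (μr.prod μ1) :=
      (Measure.measurePreserving_swap).comp hmp
    have hSet : {z : Fin (r + 1) → AddCircle (1 : ℝ) |
        MvPolynomial.eval (fun i => (AddCircle.toCircle (z i) : ℂ)) P = 0}
        = (Prod.swap ∘ e) ⁻¹' t := by
      ext z
      have harg : (Fin.cons ((AddCircle.toCircle (z 0) : ℂ))
          (fun i => (AddCircle.toCircle (z ((0 : Fin (r + 1)).succAbove i)) : ℂ)) : Fin (r + 1) → ℂ)
          = fun i => (AddCircle.toCircle (z i) : ℂ) := by
        funext i
        refine Fin.cases ?_ ?_ i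
        · simp
        · intro j
          simp [Fin.zero_succAbove]
      simp only [Set.mem_setOf_eq, Set.mem_preimage, Function.comp_apply, htdef]
      constructor
      · intro h
        show MvPolynomial.eval _ P = 0
        rw [show (Prod.swap (e z)).2 = z 0 from rfl]
        rw [show (Prod.swap (e z)).1 = fun i => z ((0 : Fin (r + 1)).succAbove i) from rfl]
        rw [harg]
        exact h
      · intro h
        have h' : MvPolynomial.eval (Fin.cons ((AddCircle.toCircle (z 0) : ℂ))
            (fun i => (AddCircle.toCircle (z ((0 : Fin (r + 1)).succAbove i)) : ℂ))) P = 0 := h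
        rwa [harg] at h'
    rw [hSet, hF.measure_preimage ht_meas.nullMeasurableSet]
    refine (Measure.measure_prod_null ht_meas).mpr ?_
    filter_upwards [compl_mem_ae_iff.mpr (IH L hL)] with y hy
    have hy' : MvPolynomial.eval (fun i => (AddCircle.toCircle (y i) : ℂ)) L ≠ 0 := hy
    set φ := MvPolynomial.eval (fun i => (AddCircle.toCircle (y i) : ℂ)) with hφdef
    set q : Polynomial ℂ := Q.map φ with hqdef
    have hq : q ≠ 0 := by
      intro h
      apply hy'
      have h2 : φ (Q.coeff Q.natDegree) = 0 := by
        rw [← Polynomial.coeff_map, ← hqdef, h, Polynomial.coeff_zero]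
      rwa [Polynomial.coeff_natDegree, ← hLdef] at h2
    have hslice : Prod.mk y ⁻¹' t ⊆
        (fun θ : AddCircle (1 : ℝ) => (AddCircle.toCircle θ : ℂ)) ⁻¹' {x | q.IsRoot x} := by
      intro θ hθ
      have hθ' : MvPolynomial.eval
          (Fin.cons ((AddCircle.toCircle θ : ℂ)) (fun i => (AddCircle.toCircle (y i) : ℂ)))
          P = 0 := hθ
      rw [MvPolynomial.eval_eq_eval_mv_eval'] at hθ'
      exact hθ'
    have hinj : Function.Injective
        (fun θ : AddCircle (1 : ℝ) => (AddCircle.toCircle θ : ℂ)) := by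
      intro u v huv
      exact AddCircle.injective_toCircle one_ne_zero (Subtype.ext huv)
    have hfin : ((fun θ : AddCircle (1 : ℝ) => (AddCircle.toCircle θ : ℂ)) ⁻¹'
        {x | q.IsRoot x}).Finite :=
      Set.Finite.preimage hinj.injOn (Polynomial.finite_setOf_isRoot hq)
    exact measure_mono_null hslice (hfin.measure_zero μ1)

end NovikovAux

/-- For a two-step complex of matrices of polynomials with `B * A = 0`, the set of points
of the torus `(ℝ/ℤ)^r` (identified with `(S¹)^r ⊂ (ℂ*)^r` via `AddCircle.toCircle`) where
`rank A + rank B` fails to be maximal has measure zero for the product of the normalized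
Haar probability measures; hence the middle homology dimension `b - rank A - rank B`
equals its generic (minimal) value almost everywhere on the torus. -/
theorem non_generic_homology_torus_null
    (r a b c : ℕ)
    (A : Matrix (Fin b) (Fin a) (MvPolynomial (Fin r) ℂ))
    (B : Matrix (Fin c) (Fin b) (MvPolynomial (Fin r) ℂ))
    (hBA : B * A = 0) :
    (Measure.pi fun _ : Fin r => (volume : Measure (AddCircle (1 : ℝ))))
      {z : Fin r → AddCircle (1 : ℝ) |
        ∃ w : Fin r → ℂ,
          (A.map (MvPolynomial.eval fun i => (AddCircle.toCircle (z i) : ℂ))).rank +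
              (B.map (MvPolynomial.eval fun i => (AddCircle.toCircle (z i) : ℂ))).rank <
            (A.map (MvPolynomial.eval w)).rank + (B.map (MvPolynomial.eval w)).rank} = 0 := by
  classical
  set f : (Fin r → ℂ) → ℕ := fun w =>
    (A.map (MvPolynomial.eval w)).rank + (B.map (MvPolynomial.eval w)).rank with hfdef
  have hbdd : BddAbove (Set.range f) := by
    refine ⟨a + b, ?_⟩
    rintro x ⟨w, rfl⟩
    exact add_le_add
      ((A.map (MvPolynomial.eval w)).rank_le_card_width.trans_eq (Fintype.card_fin a))
      ((B.map (MvPolynomial.eval w)).rank_le_card_width.trans_eq (Fintype.card_fin b))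
  have hne : (Set.range f).Nonempty := ⟨f 0, 0, rfl⟩
  obtain ⟨w0, hw0⟩ := Nat.sSup_mem hne hbdd
  obtain ⟨fA, gA, hdetA⟩ := NovikovAux.exists_minor (A.map (MvPolynomial.eval w0)) rfl
  obtain ⟨fB, gB, hdetB⟩ := NovikovAux.exists_minor (B.map (MvPolynomial.eval w0)) rfl
  set pA : MvPolynomial (Fin r) ℂ := (A.submatrix fA gA).det with hpAdef
  set pB : MvPolynomial (Fin r) ℂ := (B.submatrix fB gB).det with hpBdef
  have hmapA : ∀ w : Fin r → ℂ, MvPolynomial.eval w pA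
      = ((A.map (MvPolynomial.eval w)).submatrix fA gA).det := by
    intro w
    rw [hpAdef, RingHom.map_det, RingHom.mapMatrix_apply, Matrix.submatrix_map]
  have hmapB : ∀ w : Fin r → ℂ, MvPolynomial.eval w pB
      = ((B.map (MvPolynomial.eval w)).submatrix fB gB).det := by
    intro w
    rw [hpBdef, RingHom.map_det, RingHom.mapMatrix_apply, Matrix.submatrix_map]
  set P : MvPolynomial (Fin r) ℂ := pA * pB with hPdef
  have hPw0 : MvPolynomial.eval w0 P ≠ 0 := by
    rw [hPdef, map_mul, hmapA, hmapB]
    exact mul_ne_zero hdetA hdetB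
  have hPne : P ≠ 0 := fun h => hPw0 (by rw [h, map_zero])
  apply measure_mono_null _ (NovikovAux.eval_torus_zero_null r P hPne)
  intro z hz
  obtain ⟨w, hw⟩ := hz
  by_contra hzero
  have hmul : MvPolynomial.eval (fun i => (AddCircle.toCircle (z i) : ℂ)) pA *
      MvPolynomial.eval (fun i => (AddCircle.toCircle (z i) : ℂ)) pB ≠ 0 := by
    rw [← map_mul, ← hPdef]
    exact hzero
  have hA' : MvPolynomial.eval (fun i => (AddCircle.toCircle (z i) : ℂ)) pA ≠ 0 :=
    fun h => hmul (by rw [h, zero_mul])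
  have hB' : MvPolynomial.eval (fun i => (AddCircle.toCircle (z i) : ℂ)) pB ≠ 0 :=
    fun h => hmul (by rw [h, mul_zero])
  have hgeA : (A.map (MvPolynomial.eval w0)).rank ≤
      (A.map (MvPolynomial.eval fun i => (AddCircle.toCircle (z i) : ℂ))).rank := by
    apply NovikovAux.le_rank_of_minor _ fA gA
    rw [← hmapA]
    exact hA'
  have hgeB : (B.map (MvPolynomial.eval w0)).rank ≤
      (B.map (MvPolynomial.eval fun i => (AddCircle.toCircle (z i) : ℂ))).rank := by
    apply NovikovAux.le_rank_of_minor _ fB gB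
    rw [← hmapB]
    exact hB'
  have hle : f w ≤ f w0 := by
    rw [hw0]
    exact le_csSup hbdd ⟨w, rfl⟩
  have hge : f w0 ≤ f (fun i => (AddCircle.toCircle (z i) : ℂ)) := add_le_add hgeA hgeB
  have hlt : f (fun i => (AddCircle.toCircle (z i) : ℂ)) < f w := hw
  omega
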